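/- Let n > 3 be an integer and b̃ ∈ ℝ with 0 < b̃ < (n−3)/(n−1), and set γ = (2−b̃)/(1−b̃). Then T̃ₙ(2, b̃) is invertible and ‖T̃ₙ(2, b̃)⁻¹‖∞ ≤ max{ n(γ−1)/2 + (γ−1)²(γ+1)/(n+1−2γ) , (n+1)²/8 − γ·((n+1)/2 − γ) }. -/

import Mathlib

open Matrix BigOperators Finset

/-- The symmetric tridiagonal near-Toeplitz matrix with corner diagonal entries `bt`,
interior diagonal entries `b`, and off-diagonal entries `-1` (0-based indices). -/
noncomputable def Ttilde (n : ℕ) (b bt : ℝ) : Matrix (Fin n) (Fin n) ℝ :=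
  Matrix.of fun i j =>
    if (i : ℕ) = (j : ℕ) then (if (i : ℕ) = 0 ∨ (i : ℕ) = n - 1 then bt else b)
    else if (i : ℕ) + 1 = (j : ℕ) ∨ (j : ℕ) + 1 = (i : ℕ) then (-1 : ℝ) else 0

/-- The maximum absolute row sum (operator norm induced by the sup norm). -/
noncomputable def normInf {n : ℕ} (A : Matrix (Fin n) (Fin n) ℝ) : ℝ :=
  ⨆ i : Fin n, ∑ j : Fin n, |A i j|


lemma sum_range_cast (q : ℕ) : ∑ k ∈ range q, (k : ℝ) = q * (q - 1) / 2 := by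
  induction q with
  | zero => simp
  | succ m ih => rw [Finset.sum_range_succ, ih]; push_cast; ring

lemma Wle (a : ℝ) (ha : 0 ≤ a) (q : ℕ) :
    ∑ k ∈ range q, max (a - (k : ℝ)) 0 ≤ a * (a + 1) / 2 + 1 / 8 := by
  set m := Nat.floor a with hm
  have hm1 : (m : ℝ) ≤ a := Nat.floor_le ha
  have hm2 : a < m + 1 := Nat.lt_floor_add_one a
  have hmono : ∑ k ∈ range q, max (a - (k : ℝ)) 0
      ≤ ∑ k ∈ range (m + 1), max (a - (k : ℝ)) 0 := by
    rcases le_or_gt q (m + 1) with h | h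
    · exact Finset.sum_le_sum_of_subset_of_nonneg (Finset.range_subset_range.2 h)
        (fun k _ _ => le_max_right _ _)
    · rw [← Finset.sum_range_add_sum_Ico _ (le_of_lt h)]
      have : ∑ k ∈ Finset.Ico (m + 1) q, max (a - (k : ℝ)) 0 = 0 := by
        apply Finset.sum_eq_zero
        intro k hk
        rw [Finset.mem_Ico] at hk
        have : (m : ℝ) + 1 ≤ (k : ℝ) := by exact_mod_cast hk.1
        rw [max_eq_right (by linarith)]
      rw [this, add_zero]
  have hval : ∑ k ∈ range (m + 1), max (a - (k : ℝ)) 0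
      = (m + 1) * a - m * (m + 1) / 2 := by
    have : ∀ k ∈ range (m + 1), max (a - (k : ℝ)) 0 = a - (k : ℝ) := by
      intro k hk
      rw [Finset.mem_range] at hk
      have hk' : (k : ℝ) ≤ m := by exact_mod_cast Nat.lt_succ_iff.1 hk
      rw [max_eq_left (by linarith)]
    rw [Finset.sum_congr rfl this, Finset.sum_sub_distrib, Finset.sum_const,
      sum_range_cast, Finset.card_range, nsmul_eq_mul]
    push_cast
    ring
  rw [hval] at hmono
  nlinarith [hmono, sq_nonneg (a - m - 1/2)]

noncomputable def Pabs (t : ℝ) (q : ℕ) : ℝ := ∑ k ∈ range q, |1 - (k : ℝ) * t|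

lemma Pabs_decomp (t a : ℝ) (ht : 0 < t) (hta : t * a = 1) (q : ℕ) :
    Pabs t q = t * ((q : ℝ) * (q - 1) / 2 - q * a)
      + 2 * t * ∑ k ∈ range q, max (a - (k : ℝ)) 0 := by
  have habs : ∀ k : ℕ, |1 - (k : ℝ) * t| = t * (((k : ℝ) - a) + 2 * max (a - (k : ℝ)) 0) := by
    intro k
    have h1 : 1 - (k : ℝ) * t = t * (a - k) := by rw [mul_sub, hta]; ring
    rcases le_total ((k : ℝ)) a with h | h
    · rw [h1, abs_of_nonneg (mul_nonneg ht.le (by linarith)), max_eq_left (by linarith)]; ring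
    · rw [h1, abs_of_nonpos (mul_nonpos_of_nonneg_of_nonpos ht.le (by linarith)),
        max_eq_right (by linarith)]; ring
  induction q with
  | zero => simp [Pabs]
  | succ m ih =>
      rw [Pabs, Finset.sum_range_succ, ← Pabs, ih, habs m, Finset.sum_range_succ]
      push_cast
      ring

lemma Pabs_le (t a : ℝ) (ht : 0 < t) (hta : t * a = 1) (q : ℕ) :
    Pabs t q ≤ t * ((q : ℝ) * (q - 1) / 2 - q * a + a ^ 2 + a + 1 / 4) := by
  have ha : 0 ≤ a := by nlinarith
  have hW := Wle a ha q
  have := Pabs_decomp t a ht hta q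
  nlinarith [mul_le_mul_of_nonneg_left hW (by linarith : (0:ℝ) ≤ 2 * t)]

lemma Pabs_eq (t a : ℝ) (ht : 0 < t) (hta : t * a = 1) (q : ℕ) (hq : (q : ℝ) ≤ a + 1) :
    Pabs t q = t * ((q : ℝ) * a - q * (q - 1) / 2) := by
  induction q with
  | zero => simp [Pabs]
  | succ m ih =>
      have hm : (m : ℝ) + 1 ≤ a + 1 := by exact_mod_cast hq
      have hm' : (m : ℝ) ≤ a + 1 := by linarith
      rw [Pabs, Finset.sum_range_succ, ← Pabs, ih hm']
      have h1 : 1 - (m : ℝ) * t = t * (a - m) := by rw [mul_sub, hta]; ring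
      rw [h1, abs_of_nonneg (mul_nonneg ht.le (by linarith))]
      push_cast
      ring
open Finset

noncomputable def Tfun (n : ℕ) (bt : ℝ) (i j : ℕ) : ℝ :=
  if i = j then (if i = 0 ∨ i = n - 1 then bt else 2)
  else if i + 1 = j ∨ j + 1 = i then (-1 : ℝ) else 0

noncomputable def Mfun (n : ℕ) (t : ℝ) (i j : ℕ) : ℝ :=
  (1 - (min i j : ℕ) * t) * (1 - ((n : ℝ) - 1 - (max i j : ℕ)) * t)
    / (t * (t * ((n : ℝ) - 1) - 2))

lemma TM_entry (n : ℕ) (t : ℝ) (hn : 3 < n) (hd : t * (t * ((n : ℝ) - 1) - 2) ≠ 0)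
    (i k : ℕ) (hi : i < n) (hk : k < n) :
    ∑ j ∈ range n, Tfun n (1 - t) i j * Mfun n t j k = (if i = k then (1 : ℝ) else 0) := by
  obtain ⟨m, rfl⟩ : ∃ m, n = m + 2 := ⟨n - 2, by omega⟩
  have hm : 2 ≤ m := by omega
  push_cast at hd
  have ht0 : t ≠ 0 := left_ne_zero_of_mul hd
  have ht1 := right_ne_zero_of_mul hd
  by_cases hi0 : i = 0
  · subst hi0
    have hsub : ({0, 1} : Finset ℕ) ⊆ range (m + 2) := by
      intro j hj
      simp only [Finset.mem_insert, Finset.mem_singleton] at hj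
      simp only [Finset.mem_range]
      omega
    rw [← Finset.sum_subset hsub (by
      intro j hj hnot
      simp only [Finset.mem_range] at hj
      simp only [Finset.mem_insert, Finset.mem_singleton] at hnot
      push_neg at hnot
      have : Tfun (m + 2) (1 - t) 0 j = 0 := by
        have h1 : ¬(0 = j) := by omega
        have h2 : ¬(0 + 1 = j ∨ j + 1 = 0) := by omega
        simp only [Tfun]
        rw [if_neg h1, if_neg h2]
      rw [this, zero_mul])]
    rw [Finset.sum_pair (by norm_num : (0 : ℕ) ≠ 1)]
    have T00 : Tfun (m + 2) (1 - t) 0 0 = 1 - t := by simp [Tfun]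
    have T01 : Tfun (m + 2) (1 - t) 0 1 = -1 := by norm_num [Tfun]
    rw [T00, T01]
    rcases Nat.eq_zero_or_pos k with rfl | hk1
    · rw [if_pos rfl]
      simp only [Mfun, min_self, max_self, min_eq_right (Nat.zero_le 1),
        max_eq_left (Nat.zero_le 1)]
      push_cast
      field_simp
      try ring
    · rw [if_neg (by omega)]
      simp only [Mfun, min_eq_left (Nat.zero_le k), max_eq_right (Nat.zero_le k),
        min_eq_left (by omega : 1 ≤ k), max_eq_right (by omega : 1 ≤ k)]
      push_cast
      field_simp
      try ring
  · by_cases hin : i = m + 1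
    · subst hin
      have hsub : ({m, m + 1} : Finset ℕ) ⊆ range (m + 2) := by
        intro j hj
        simp only [Finset.mem_insert, Finset.mem_singleton] at hj
        simp only [Finset.mem_range]
        omega
      rw [← Finset.sum_subset hsub (by
        intro j hj hnot
        simp only [Finset.mem_range] at hj
        simp only [Finset.mem_insert, Finset.mem_singleton] at hnot
        push_neg at hnot
        have : Tfun (m + 2) (1 - t) (m + 1) j = 0 := by
          have h1 : ¬(m + 1 = j) := by omega
          have h2 : ¬(m + 1 + 1 = j ∨ j + 1 = m + 1) := by omega
          simp only [Tfun]
          rw [if_neg h1, if_neg h2]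
        rw [this, zero_mul])]
      rw [Finset.sum_pair (by omega : m ≠ m + 1)]
      have Ta : Tfun (m + 2) (1 - t) (m + 1) m = -1 := by
        have h1 : ¬(m + 1 = m) := by omega
        simp [Tfun, h1]
      have Tb : Tfun (m + 2) (1 - t) (m + 1) (m + 1) = 1 - t := by simp [Tfun]
      rw [Ta, Tb]
      rcases Nat.lt_or_ge k (m + 1) with hk1 | hk1
      · have hkm : k ≤ m := by omega
        rw [if_neg (by omega)]
        simp only [Mfun, min_eq_right hkm, max_eq_left hkm,
          min_eq_right (by omega : k ≤ m + 1), max_eq_left (by omega : k ≤ m + 1)]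
        push_cast
        field_simp
        try ring
      · have hk2 : k = m + 1 := by omega
        subst hk2
        rw [if_pos rfl]
        simp only [Mfun, min_eq_left (by omega : m ≤ m + 1),
          max_eq_right (by omega : m ≤ m + 1), min_self, max_self]
        push_cast
        field_simp
        try ring
    · obtain ⟨p, rfl⟩ : ∃ p, i = p + 1 := ⟨i - 1, by omega⟩
      have hp : p + 1 < m + 1 := by omega
      have hsub : ({p, p + 1, p + 2} : Finset ℕ) ⊆ range (m + 2) := by
        intro j hj
        simp only [Finset.mem_insert, Finset.mem_singleton] at hj
        simp only [Finset.mem_range]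
        omega
      rw [← Finset.sum_subset hsub (by
        intro j hj hnot
        simp only [Finset.mem_range] at hj
        simp only [Finset.mem_insert, Finset.mem_singleton] at hnot
        push_neg at hnot
        have : Tfun (m + 2) (1 - t) (p + 1) j = 0 := by
          have h1 : ¬(p + 1 = j) := by omega
          have h2 : ¬(p + 1 + 1 = j ∨ j + 1 = p + 1) := by omega
          simp only [Tfun]
          rw [if_neg h1, if_neg h2]
        rw [this, zero_mul])]
      rw [show ({p, p + 1, p + 2} : Finset ℕ) = insert p {p + 1, p + 2} from rfl,
        Finset.sum_insert (by
          simp only [Finset.mem_insert, Finset.mem_singleton]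
          omega),
        Finset.sum_pair (by omega : p + 1 ≠ p + 2)]
      have Ta : Tfun (m + 2) (1 - t) (p + 1) p = -1 := by
        have h1 : ¬(p + 1 = p) := by omega
        simp [Tfun, h1]
      have Tb : Tfun (m + 2) (1 - t) (p + 1) (p + 1) = 2 := by
        have h1 : ¬(p + 1 = 0) := by omega
        have h2 : ¬(p + 1 = m + 1) := by omega
        simp [Tfun, h1, h2, show p ≠ m by omega]
      have Tc : Tfun (m + 2) (1 - t) (p + 1) (p + 2) = -1 := by
        have h1 : ¬(p + 1 = p + 2) := by omega
        simp [Tfun, h1]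
      rw [Ta, Tb, Tc]
      rcases Nat.lt_or_ge k (p + 1) with hk1 | hk1
      · have h1 : k ≤ p := by omega
        rw [if_neg (by omega)]
        simp only [Mfun, min_eq_right h1, max_eq_left h1,
          min_eq_right (by omega : k ≤ p + 1), max_eq_left (by omega : k ≤ p + 1),
          min_eq_right (by omega : k ≤ p + 2), max_eq_left (by omega : k ≤ p + 2)]
        push_cast
        field_simp
        try ring
      · rcases Nat.lt_or_ge (p + 1) k with hk2 | hk2
        · have h1 : p + 2 ≤ k := by omega
          rw [if_neg (by omega)]
          simp only [Mfun, min_eq_left (by omega : p ≤ k), max_eq_right (by omega : p ≤ k),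
            min_eq_left (by omega : p + 1 ≤ k), max_eq_right (by omega : p + 1 ≤ k),
            min_eq_left h1, max_eq_right h1]
          push_cast
          field_simp
          try ring
        · have hk3 : k = p + 1 := by omega
          subst hk3
          rw [if_pos rfl]
          simp only [Mfun, min_eq_left (by omega : p ≤ p + 1),
            max_eq_right (by omega : p ≤ p + 1), min_self, max_self,
            min_eq_right (by omega : p + 1 ≤ p + 2),
            max_eq_left (by omega : p + 1 ≤ p + 2)]
          push_cast
          field_simp
          try ring

section helpers

lemma key1 (n a x : ℝ) (hn : 4 ≤ n) (ha1 : 1 ≤ a) (ha2 : 2*a ≤ n-1)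
    (hx0 : 0 ≤ x) (hxa : x ≤ a) :
    (n-1-x-a)*((x+1)*(2*a-x)/2) + (a-x)*((n-1-x)*(n-2-x)/2 - (n-1-x)*a + a^2+a+1/4)
      ≤ n*a*(n-1-2*a)/2 + a^2*(a+2) := by
  nlinarith [sq_nonneg (a-x), sq_nonneg (n-1-2*a), sq_nonneg (a-1), sq_nonneg x,
    mul_nonneg (sub_nonneg.2 hxa) hx0, sq_nonneg (n-1-x-a), sq_nonneg (a-x-1),
    mul_nonneg (mul_nonneg (sub_nonneg.2 hxa) hx0) hx0]

lemma key1' (n a y : ℝ) (hn : 4 ≤ n) (ha1 : 1 ≤ a) (ha2 : 2*a ≤ n-1)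
    (hy0 : 0 ≤ y) (hya : y ≤ a) :
    (a-y)*((n-y)*(n-y-1)/2 - (n-y)*a + a^2+a+1/4) + (n-1-y-a)*(y*(2*a-y+1)/2)
      ≤ n*a*(n-1-2*a)/2 + a^2*(a+2) := by
  nlinarith [sq_nonneg (a-y), sq_nonneg (n-1-2*a), sq_nonneg (a-1), sq_nonneg y,
    mul_nonneg (sub_nonneg.2 hya) hy0, sq_nonneg (n-1-y-a), sq_nonneg (a-y-1),
    mul_nonneg (mul_nonneg (sub_nonneg.2 hya) hy0) hy0]

lemma key2 (n a x : ℝ) (ha1 : 1 ≤ a) (ha2 : 2*a ≤ n-1)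
    (hax : a ≤ x) (hxn : x ≤ n-1-a) :
    (n-1-x-a)*((x+1)*x/2 - (x+1)*a + a^2+a+1/4)
      + (x-a)*((n-1-x)*(n-2-x)/2 - (n-1-x)*a + a^2+a+1/4)
      ≤ ((n+1)^2/8 - (a+1)*((n+1)/2-(a+1)))*(n-1-2*a) := by
  nlinarith [sq_nonneg (n-1-2*x), sq_nonneg (n-1-2*a), sq_nonneg (x-a),
    sq_nonneg (n-1-x-a), mul_nonneg (sub_nonneg.2 hax) (sub_nonneg.2 hxn),
    sq_nonneg (2*x-n+1+2*a), sq_nonneg (a-1)]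

end helpers

set_option maxHeartbeats 1000000 in
lemma rowsum_le (n : ℕ) (t a : ℝ) (hn : 3 < n) (ht : 0 < t) (hta : t * a = 1)
    (ha1 : 1 ≤ a) (ha2 : 2 * a < (n : ℝ) - 1) (i : ℕ) (hi : i < n) :
    ∑ k ∈ range n, |Mfun n t i k| ≤
      max ((n : ℝ) * a / 2 + a ^ 2 * (a + 2) / ((n : ℝ) - 1 - 2 * a))
          (((n : ℝ) + 1) ^ 2 / 8 - (a + 1) * (((n : ℝ) + 1) / 2 - (a + 1))) := by
  have hN : (4 : ℝ) ≤ (n : ℝ) := by exact_mod_cast hn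
  have ha0 : (0 : ℝ) < a := lt_of_lt_of_le one_pos ha1
  have h2a : (0 : ℝ) < (n : ℝ) - 1 - 2 * a := by linarith
  have hDD : t * (t * ((n : ℝ) - 1) - 2) = t ^ 2 * ((n : ℝ) - 1 - 2 * a) := by
    linear_combination 2 * t * hta
  have hD : 0 < t * (t * ((n : ℝ) - 1) - 2) := by rw [hDD]; positivity
  have hiN : (i : ℝ) + 1 ≤ (n : ℝ) := by exact_mod_cast hi
  have hcast : ((n - 1 - i : ℕ) : ℝ) = (n : ℝ) - 1 - (i : ℝ) := by
    rw [show n - 1 - i = n - (i + 1) from by omega, Nat.cast_sub (by omega)]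
    push_cast; ring
  -- split the row sum
  have hsplit := Finset.sum_range_add_sum_Ico (fun k => |Mfun n t i k|)
    (show i + 1 ≤ n from hi)
  have h1 : ∑ k ∈ range (i + 1), |Mfun n t i k|
      = Pabs t (i + 1) * (|1 - ((n : ℝ) - 1 - (i : ℝ)) * t| / (t * (t * ((n : ℝ) - 1) - 2))) := by
    rw [Pabs, Finset.sum_mul]
    refine Finset.sum_congr rfl fun k hk => ?_
    have hk' : k ≤ i := by simpa [Nat.lt_succ_iff] using hk
    simp only [Mfun, min_eq_right hk', max_eq_left hk']
    rw [abs_div, abs_mul, abs_of_pos hD, mul_div_assoc]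
  have h2 : ∑ k ∈ Finset.Ico (i + 1) n, |Mfun n t i k|
      = (|1 - (i : ℝ) * t| / (t * (t * ((n : ℝ) - 1) - 2))) * Pabs t (n - 1 - i) := by
    have e1 : ∑ k ∈ Finset.Ico (i + 1) n, |Mfun n t i k|
        = ∑ k ∈ Finset.Ico (i + 1) n,
            (|1 - (i : ℝ) * t| / (t * (t * ((n : ℝ) - 1) - 2)))
              * |1 - ((n : ℝ) - 1 - (k : ℝ)) * t| := by
      refine Finset.sum_congr rfl fun k hk => ?_
      have hk' : i ≤ k := by
        have := (Finset.mem_Ico.1 hk).1; omega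
      simp only [Mfun, min_eq_left hk', max_eq_right hk']
      rw [abs_div, abs_mul, abs_of_pos hD]
      ring
    rw [e1, ← Finset.mul_sum]
    congr 1
    rw [Finset.sum_Ico_eq_sum_range,
      show n - (i + 1) = n - 1 - i from by omega, Pabs,
      ← Finset.sum_range_reflect (fun j => |1 - (j : ℝ) * t|) (n - 1 - i)]
    refine Finset.sum_congr rfl fun j hj => ?_
    have hj' : j < n - 1 - i := Finset.mem_range.1 hj
    rw [show n - 1 - i - 1 - j = n - (i + j + 2) from by omega,
      Nat.cast_sub (by omega : i + j + 2 ≤ n)]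
    congr 1
    push_cast
    ring
  have hui : |1 - (i : ℝ) * t| = t * |a - (i : ℝ)| := by
    rw [show 1 - (i : ℝ) * t = t * (a - (i : ℝ)) from by linear_combination -hta,
      abs_mul, abs_of_pos ht]
  have hvi : |1 - ((n : ℝ) - 1 - (i : ℝ)) * t| = t * |a - ((n : ℝ) - 1 - (i : ℝ))| := by
    rw [show 1 - ((n : ℝ) - 1 - (i : ℝ)) * t = t * (a - ((n : ℝ) - 1 - (i : ℝ))) from by
      linear_combination -hta, abs_mul, abs_of_pos ht]
  have htot : ∑ k ∈ range n, |Mfun n t i k|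
      = (t * |a - ((n : ℝ) - 1 - (i : ℝ))| * Pabs t (i + 1)
          + t * |a - (i : ℝ)| * Pabs t (n - 1 - i)) / (t * (t * ((n : ℝ) - 1) - 2)) := by
    rw [← hsplit, h1, h2, hui, hvi]
    ring
  have hx0 : (0 : ℝ) ≤ (i : ℝ) := Nat.cast_nonneg i
  have hP1le : Pabs t (i + 1)
      ≤ t * (((i : ℝ) + 1) * (((i : ℝ) + 1) - 1) / 2 - ((i : ℝ) + 1) * a + a ^ 2 + a + 1/4) := by
    have := Pabs_le t a ht hta (i + 1)
    push_cast at this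
    exact this
  have hP2le : Pabs t (n - 1 - i)
      ≤ t * (((n : ℝ) - 1 - (i : ℝ)) * (((n : ℝ) - 1 - (i : ℝ)) - 1) / 2
          - ((n : ℝ) - 1 - (i : ℝ)) * a + a ^ 2 + a + 1/4) := by
    have := Pabs_le t a ht hta (n - 1 - i)
    rw [hcast] at this
    exact this
  have hP1nn : 0 ≤ Pabs t (i + 1) := Finset.sum_nonneg fun k _ => abs_nonneg _
  have hP2nn : 0 ≤ Pabs t (n - 1 - i) := Finset.sum_nonneg fun k _ => abs_nonneg _
  rcases le_or_gt (i : ℝ) a with hxa | hxa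
  · -- boundary case, left side: i ≤ a
    have hw : a ≤ (n : ℝ) - 1 - (i : ℝ) := by linarith
    have hP1 : Pabs t (i + 1) = t * (((i : ℝ) + 1) * a - ((i : ℝ) + 1) * (i : ℝ) / 2) := by
      have := Pabs_eq t a ht hta (i + 1) (by push_cast; linarith)
      rw [this]; push_cast; ring
    refine le_trans ?_ (le_max_left _ _)
    rw [htot, abs_of_nonpos (by linarith : a - ((n : ℝ) - 1 - (i : ℝ)) ≤ 0),
      abs_of_nonneg (by linarith : (0 : ℝ) ≤ a - (i : ℝ)), div_le_iff₀ hD]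
    have hBD : ((n : ℝ) * a / 2 + a ^ 2 * (a + 2) / ((n : ℝ) - 1 - 2 * a))
        * (t * (t * ((n : ℝ) - 1) - 2))
        = t ^ 2 * ((n : ℝ) * a * ((n : ℝ) - 1 - 2 * a) / 2 + a ^ 2 * (a + 2)) := by
      rw [hDD]
      have e : a ^ 2 * (a + 2) / ((n : ℝ) - 1 - 2 * a) * ((n : ℝ) - 1 - 2 * a) = a ^ 2 * (a + 2) :=
        div_mul_cancel₀ _ h2a.ne'
      linear_combination t ^ 2 * e
    rw [hBD, hP1]
    have key := key1 (n : ℝ) a (i : ℝ) hN ha1 (le_of_lt ha2) hx0 hxa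
    have hc2 : (0 : ℝ) ≤ t * (a - (i : ℝ)) := mul_nonneg ht.le (by linarith)
    nlinarith [mul_le_mul_of_nonneg_left hP2le hc2,
      mul_le_mul_of_nonneg_left key (sq_nonneg t)]
  · rcases le_or_gt ((n : ℝ) - 1 - (i : ℝ)) a with hwa | hwa
    · -- boundary case, right side
      have hxb : a < (i : ℝ) := by linarith
      have hP2 : Pabs t (n - 1 - i)
          = t * (((n : ℝ) - 1 - (i : ℝ)) * a
              - ((n : ℝ) - 1 - (i : ℝ)) * (((n : ℝ) - 1 - (i : ℝ)) - 1) / 2) := by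
        have := Pabs_eq t a ht hta (n - 1 - i) (by rw [hcast]; linarith)
        rw [hcast] at this
        rw [this]
      refine le_trans ?_ (le_max_left _ _)
      rw [htot, abs_of_nonneg (by linarith : (0 : ℝ) ≤ a - ((n : ℝ) - 1 - (i : ℝ))),
        abs_of_nonpos (by linarith : a - (i : ℝ) ≤ 0), div_le_iff₀ hD]
      have hBD : ((n : ℝ) * a / 2 + a ^ 2 * (a + 2) / ((n : ℝ) - 1 - 2 * a))
          * (t * (t * ((n : ℝ) - 1) - 2))
          = t ^ 2 * ((n : ℝ) * a * ((n : ℝ) - 1 - 2 * a) / 2 + a ^ 2 * (a + 2)) := by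
        rw [hDD]
        have e : a ^ 2 * (a + 2) / ((n : ℝ) - 1 - 2 * a) * ((n : ℝ) - 1 - 2 * a) = a ^ 2 * (a + 2) :=
          div_mul_cancel₀ _ h2a.ne'
        linear_combination t ^ 2 * e
      rw [hBD, hP2]
      have key := key1' (n : ℝ) a ((n : ℝ) - 1 - (i : ℝ)) hN ha1 (le_of_lt ha2)
        (by linarith) hwa
      have hc1 : (0 : ℝ) ≤ t * (a - ((n : ℝ) - 1 - (i : ℝ))) :=
        mul_nonneg ht.le (by linarith)
      nlinarith [mul_le_mul_of_nonneg_left hP1le hc1,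
        mul_le_mul_of_nonneg_left key (sq_nonneg t)]
    · -- middle case
      refine le_trans ?_ (le_max_right _ _)
      rw [htot, abs_of_nonpos (by linarith : a - ((n : ℝ) - 1 - (i : ℝ)) ≤ 0),
        abs_of_nonpos (by linarith : a - (i : ℝ) ≤ 0), div_le_iff₀ hD]
      have hBD : (((n : ℝ) + 1) ^ 2 / 8 - (a + 1) * (((n : ℝ) + 1) / 2 - (a + 1)))
          * (t * (t * ((n : ℝ) - 1) - 2))
          = t ^ 2 * ((((n : ℝ) + 1) ^ 2 / 8 - (a + 1) * (((n : ℝ) + 1) / 2 - (a + 1)))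
              * ((n : ℝ) - 1 - 2 * a)) := by
        rw [hDD]; ring
      rw [hBD]
      have key := key2 (n : ℝ) a (i : ℝ) ha1 (le_of_lt ha2) (le_of_lt hxa)
        (by linarith)
      have hc1 : (0 : ℝ) ≤ t * ((i : ℝ) - a) := mul_nonneg ht.le (by linarith)
      have hc2 : (0 : ℝ) ≤ t * (((n : ℝ) - 1 - (i : ℝ)) - a) := mul_nonneg ht.le (by linarith)
      nlinarith [mul_le_mul_of_nonneg_left hP1le hc2,
        mul_le_mul_of_nonneg_left hP2le hc1,
        mul_le_mul_of_nonneg_left key (sq_nonneg t)]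
noncomputable def Minv (n : ℕ) (t : ℝ) : Matrix (Fin n) (Fin n) ℝ :=
  Matrix.of fun i j => Mfun n t (i : ℕ) (j : ℕ)

theorem stmt15 (n : ℕ) (hn : 3 < n) (bt : ℝ)
    (hbt1 : 0 < bt) (hbt2 : bt < ((n : ℝ) - 3) / ((n : ℝ) - 1)) :
    IsUnit (Ttilde n 2 bt) ∧
    normInf ((Ttilde n 2 bt)⁻¹) ≤
      max ((n : ℝ) * ((2 - bt) / (1 - bt) - 1) / 2
            + ((2 - bt) / (1 - bt) - 1) ^ 2 * ((2 - bt) / (1 - bt) + 1)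
                / ((n : ℝ) + 1 - 2 * ((2 - bt) / (1 - bt))))
        (((n : ℝ) + 1) ^ 2 / 8
            - ((2 - bt) / (1 - bt)) * (((n : ℝ) + 1) / 2 - (2 - bt) / (1 - bt))) := by
  have hN : (4 : ℝ) ≤ (n : ℝ) := by exact_mod_cast hn
  have hN1 : (0 : ℝ) < (n : ℝ) - 1 := by linarith
  have hfrac1 : ((n : ℝ) - 3) / ((n : ℝ) - 1) < 1 := by
    rw [div_lt_one hN1]; linarith
  have hbt3 : bt < 1 := hbt2.trans hfrac1
  set t : ℝ := 1 - bt with hdef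
  have ht : 0 < t := by rw [hdef]; linarith
  set a : ℝ := 1 / t with hadef
  have hta : t * a = 1 := by rw [hadef]; field_simp
  have ha0 : 0 < a := by rw [hadef]; positivity
  have ha1 : 1 ≤ a := by rw [hadef, le_div_iff₀ ht, one_mul]; rw [hdef]; linarith
  have hbtN : bt * ((n : ℝ) - 1) < (n : ℝ) - 3 := (lt_div_iff₀ hN1).1 hbt2
  have h2t : 2 < t * ((n : ℝ) - 1) := by rw [hdef]; nlinarith
  have ha2 : 2 * a < (n : ℝ) - 1 := by
    nlinarith [mul_lt_mul_of_pos_right h2t ha0, hta]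
  have hd : t * (t * ((n : ℝ) - 1) - 2) ≠ 0 :=
    ne_of_gt (mul_pos ht (by linarith))
  have hbt' : bt = 1 - t := by rw [hdef]; ring
  have hTM : Ttilde n 2 bt * Minv n t = 1 := by
    ext i k
    rw [Matrix.mul_apply]
    have hs : ∀ j : Fin n, Ttilde n 2 bt i j * Minv n t j k
        = Tfun n (1 - t) (i : ℕ) (j : ℕ) * Mfun n t (j : ℕ) (k : ℕ) := by
      intro j
      rw [hbt']
      rfl
    rw [Finset.sum_congr rfl fun j _ => hs j,
      Fin.sum_univ_eq_sum_range (fun j => Tfun n (1 - t) (i : ℕ) j * Mfun n t j (k : ℕ)) n,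
      TM_entry n t hn hd (i : ℕ) (k : ℕ) i.isLt k.isLt, Matrix.one_apply]
    simp [Fin.val_inj]
  refine ⟨(Matrix.isUnit_iff_isUnit_det _).2 (Matrix.isUnit_det_of_right_inverse hTM), ?_⟩
  rw [Matrix.inv_eq_right_inv hTM]
  have hne : Nonempty (Fin n) := ⟨⟨0, by omega⟩⟩
  show (⨆ i : Fin n, ∑ j : Fin n, |Minv n t i j|) ≤ _
  apply ciSup_le
  intro i
  have hrow := rowsum_le n t a hn ht hta ha1 ha2 (i : ℕ) i.isLt
  have hconv : ∑ j : Fin n, |Minv n t i j| = ∑ k ∈ Finset.range n, |Mfun n t (i : ℕ) k| :=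
    Fin.sum_univ_eq_sum_range (fun k => |Mfun n t (i : ℕ) k|) n
  rw [hconv]
  refine le_trans hrow (le_of_eq ?_)
  have hγ : (2 - bt) / (1 - bt) = a + 1 := by
    rw [hbt', hadef]
    have htne : t ≠ 0 := ne_of_gt ht
    rw [show (1:ℝ) - (1 - t) = t by ring]
    field_simp
    ring
  rw [hγ]
  have h2a : (0 : ℝ) < (n : ℝ) - 1 - 2 * a := by linarith
  congr 1
  · have e : (n : ℝ) + 1 - 2 * (a + 1) = (n : ℝ) - 1 - 2 * a := by ring
    rw [e]
    have hne2 : (n : ℝ) - 1 - 2 * a ≠ 0 := ne_of_gt h2a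
    field_simp
    ring
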